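/- arXiv:1106.4737 — 2 statements merged into one kernel-verified Lean document; each statement's English description precedes it below -/
import Mathlib

section
/- For r > 0 set t := r² and define the matrices A(r) := !![1, 1 − r²; 1 − r², exp(r²)] (2×2 real), B(r) := !![0, 0, −r(2 − r²), r; r(2 − r²), −r, 0, 0] (2×4 real), and C(r) := !![2, 0, 2 − 4r² + r⁴, r²; 0, 1, r², 1; 2 − 4r² + r⁴, r², 2·exp(r²), 0; r², 1, 0, exp(r²)] (4×4 real). Then A(r) is invertible and C(r) − B(r)ᵀ · A(r)⁻¹ · B(r) = Λ(t), where Λ(t) is the explicit matrix described in the context. -/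
open Real Matrix

noncomputable def dd (t : ℝ) : ℝ := 1 - 2*t + t^2 - Real.exp t

noncomputable def NN (t : ℝ) : Matrix (Fin 4) (Fin 4) ℝ :=
  !![-2*Real.exp t + 2 - 2*t^2 + t^3, t*(t-2),
     4*t*Real.exp t - 4*t + 3*t^2 - t^3 - t^2*Real.exp t - 2*Real.exp t + 2, t*(t-1-Real.exp t);
     t*(t-2), -Real.exp t + 1 - t + t^2, t*(t-1-Real.exp t), -Real.exp t + 1 - t;
     4*t*Real.exp t - 4*t + 3*t^2 - t^3 - t^2*Real.exp t - 2*Real.exp t + 2, t*(t-1-Real.exp t),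
     Real.exp t * (-2*Real.exp t + 2 - 2*t^2 + t^3), t*(t-2)*Real.exp t;
     t*(t-1-Real.exp t), -Real.exp t + 1 - t, t*(t-2)*Real.exp t,
     Real.exp t * (-Real.exp t + 1 - t + t^2)]

noncomputable def Lam (t : ℝ) : Matrix (Fin 4) (Fin 4) ℝ := (1 / dd t) • NN t

/-- The covariance block `A(r)`. -/
noncomputable def Amat (r : ℝ) : Matrix (Fin 2) (Fin 2) ℝ :=
  !![1, 1 - r^2; 1 - r^2, Real.exp (r^2)]

/-- The covariance block `B(r)`. -/
noncomputable def Bmat (r : ℝ) : Matrix (Fin 2) (Fin 4) ℝ :=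
  !![0, 0, -r*(2 - r^2), r; r*(2 - r^2), -r, 0, 0]

/-- The covariance block `C(r)`. -/
noncomputable def Cmat (r : ℝ) : Matrix (Fin 4) (Fin 4) ℝ :=
  !![2, 0, 2 - 4*r^2 + r^4, r^2;
     0, 1, r^2, 1;
     2 - 4*r^2 + r^4, r^2, 2*Real.exp (r^2), 0;
     r^2, 1, 0, Real.exp (r^2)]

theorem schur_complement_eq_Lam (r : ℝ) (hr : 0 < r) :
    IsUnit (Amat r) ∧ Cmat r - (Bmat r)ᵀ * (Amat r)⁻¹ * Bmat r = Lam (r^2) := by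
  have ht : 0 < r^2 := by positivity
  have hdd : dd (r^2) < 0 := by
    have h := Real.sum_le_exp_of_nonneg ht.le 4
    norm_num [Finset.sum_range_succ, Nat.factorial] at h
    unfold dd; nlinarith [sq_nonneg (r^2 - 3/2)]
  have hdd' : dd (r^2) ≠ 0 := ne_of_lt hdd
  have hdd2 : 1 - 2*r^2 + (r^2)^2 - Real.exp (r^2) ≠ 0 := by simpa [dd] using hdd'
  have hdd3 : (1:ℝ) - r^2*2 + r^4 - Real.exp (r^2) ≠ 0 := by
    rw [show (1:ℝ) - r^2*2 + r^4 - Real.exp (r^2) = dd (r^2) by unfold dd; ring]; exact hdd'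
  have hdd4 : (1:ℝ) - 2*r^2 + r^4 - Real.exp (r^2) ≠ 0 := by
    rw [show (1:ℝ) - 2*r^2 + r^4 - Real.exp (r^2) = dd (r^2) by unfold dd; ring]; exact hdd'
  have hdet : (Amat r).det = - dd (r^2) := by
    simp [Amat, Matrix.det_fin_two, dd]; ring
  have hU : IsUnit (Amat r) := by
    rw [Matrix.isUnit_iff_isUnit_det, hdet, isUnit_iff_ne_zero]
    simpa using hdd'
  refine ⟨hU, ?_⟩
  have hinv : (Amat r)⁻¹ = (-1 / dd (r^2)) • !![Real.exp (r^2), -(1 - r^2); -(1 - r^2), 1] := by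
    apply Matrix.inv_eq_right_inv
    ext i j
    fin_cases i <;> fin_cases j <;>
      simp [Amat, Matrix.mul_apply, Fin.sum_univ_succ, dd] <;>
      field_simp <;> ring
  rw [hinv]
  ext i j
  fin_cases i <;> fin_cases j <;>
    simp [Bmat, Cmat, Lam, NN, dd, Matrix.mul_apply, Fin.sum_univ_succ,
      Matrix.transpose_apply] <;>
    field_simp <;> ring
end

section
/- Let Λ(t) be the explicit real symmetric 4×4 matrix described in the context. There exists δ > 0 such that Λ(t) is invertible for all t ∈ (0, δ), and the matrix t⁵·Λ(t)⁻¹ converges entrywise, as t → 0⁺, to the matrix !![0, 0, 0, 0; 0, 4320, 0, −4320; 0, 0, 0, 0; 0, −4320, 0, 4320]. -/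
open Real Matrix

/-- The entrywise limit of `t⁵ Λ(t)⁻¹` as `t → 0⁺`. -/
noncomputable def Y0 : Matrix (Fin 4) (Fin 4) ℝ :=
  !![0, 0, 0, 0; 0, 4320, 0, -4320; 0, 0, 0, 0; 0, -4320, 0, 4320]

noncomputable def q3f (t : ℝ) : ℝ := (4) + (-12)*Real.exp t + (12)*Real.exp t^2 + (-4)*Real.exp t^3 + (-12)*t^2*Real.exp t + (12)*t^2*Real.exp t^2 + (-4)*t^3*Real.exp t + (-4)*t^3*Real.exp t^2 + (-1)*t^4*Real.exp t + (1)*t^4*Real.exp t^2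

noncomputable def AA (t : ℝ) : Matrix (Fin 4) (Fin 4) ℝ :=
  !![(-2)*Real.exp t + (4)*Real.exp t^2 + (-2)*Real.exp t^3 + (-4)*t*Real.exp t + (4)*t*Real.exp t^2 + (-1)*t^2*Real.exp t + (-1)*t^2*Real.exp t^2 + (1)*t^3*Real.exp t^2, (-2)*t^2*Real.exp t + (2)*t^2*Real.exp t^2 + (-1)*t^3*Real.exp t + (-1)*t^3*Real.exp t^2, (2) + (-4)*Real.exp t + (2)*Real.exp t^2 + (4)*t*Real.exp t + (-4)*t*Real.exp t^2 + (1)*t^2*Real.exp t + (1)*t^2*Real.exp t^2 + (1)*t^3*Real.exp t, (2)*t + (-4)*t*Real.exp t + (2)*t*Real.exp t^2 + (-2)*t^3*Real.exp t;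
     (-2)*t^2*Real.exp t + (2)*t^2*Real.exp t^2 + (-1)*t^3*Real.exp t + (-1)*t^3*Real.exp t^2, (-4)*Real.exp t + (8)*Real.exp t^2 + (-4)*Real.exp t^3 + (4)*t*Real.exp t + (-4)*t*Real.exp t^2 + (-2)*t^2*Real.exp t + (10)*t^2*Real.exp t^2 + (-4)*t^3*Real.exp t^2 + (-1)*t^4*Real.exp t + (1)*t^4*Real.exp t^2, (2)*t + (-4)*t*Real.exp t + (2)*t*Real.exp t^2 + (-2)*t^3*Real.exp t, (4) + (-8)*Real.exp t + (4)*Real.exp t^2 + (-4)*t + (4)*t*Real.exp t + (2)*t^2 + (-10)*t^2*Real.exp t + (4)*t^3*Real.exp t;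
     (2) + (-4)*Real.exp t + (2)*Real.exp t^2 + (4)*t*Real.exp t + (-4)*t*Real.exp t^2 + (1)*t^2*Real.exp t + (1)*t^2*Real.exp t^2 + (1)*t^3*Real.exp t, (2)*t + (-4)*t*Real.exp t + (2)*t*Real.exp t^2 + (-2)*t^3*Real.exp t, (-2) + (4)*Real.exp t + (-2)*Real.exp t^2 + (-4)*t + (4)*t*Real.exp t + (-1)*t^2 + (-1)*t^2*Real.exp t + (1)*t^3*Real.exp t, (-2)*t^2 + (2)*t^2*Real.exp t + (-1)*t^3 + (-1)*t^3*Real.exp t;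
     (2)*t + (-4)*t*Real.exp t + (2)*t*Real.exp t^2 + (-2)*t^3*Real.exp t, (4) + (-8)*Real.exp t + (4)*Real.exp t^2 + (-4)*t + (4)*t*Real.exp t + (2)*t^2 + (-10)*t^2*Real.exp t + (4)*t^3*Real.exp t, (-2)*t^2 + (2)*t^2*Real.exp t + (-1)*t^3 + (-1)*t^3*Real.exp t, (-4) + (8)*Real.exp t + (-4)*Real.exp t^2 + (4)*t + (-4)*t*Real.exp t + (-2)*t^2 + (10)*t^2*Real.exp t + (-4)*t^3*Real.exp t + (-1)*t^4 + (1)*t^4*Real.exp t]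

noncomputable def P1 (t : ℝ) : ℝ := (1) + (1)*t + ((1:ℝ)/2)*t^2 + ((1:ℝ)/6)*t^3 + ((1:ℝ)/24)*t^4 + ((1:ℝ)/120)*t^5 + ((1:ℝ)/720)*t^6 + ((1:ℝ)/5040)*t^7 + ((1:ℝ)/40320)*t^8 + ((1:ℝ)/362880)*t^9

noncomputable def P2 (t : ℝ) : ℝ := (1) + (2)*t + (2)*t^2 + ((4:ℝ)/3)*t^3 + ((2:ℝ)/3)*t^4 + ((4:ℝ)/15)*t^5 + ((4:ℝ)/45)*t^6 + ((8:ℝ)/315)*t^7 + ((2:ℝ)/315)*t^8 + ((4:ℝ)/2835)*t^9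

noncomputable def P3 (t : ℝ) : ℝ := (1) + (3)*t + ((9:ℝ)/2)*t^2 + ((9:ℝ)/2)*t^3 + ((27:ℝ)/8)*t^4 + ((81:ℝ)/40)*t^5 + ((81:ℝ)/80)*t^6 + ((243:ℝ)/560)*t^7 + ((729:ℝ)/4480)*t^8 + ((243:ℝ)/4480)*t^9

noncomputable def R1 (t : ℝ) : ℝ := (Real.exp t ^ 1 - P1 t) / t^9

noncomputable def R2 (t : ℝ) : ℝ := (Real.exp t ^ 2 - P2 t) / t^9

noncomputable def R3 (t : ℝ) : ℝ := (Real.exp t ^ 3 - P3 t) / t^9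

lemma remR1 : Filter.Tendsto R1 (nhdsWithin 0 (Set.Ioi 0)) (nhds 0) := by
  apply squeeze_zero_norm' (a := fun t : ℝ => t)
  · filter_upwards [Ioo_mem_nhdsGT_of_mem (by norm_num : (0:ℝ) ∈ Set.Ico (0:ℝ) (1/3))] with t ht
    have ht0 : (0:ℝ) < t := ht.1
    have ht3 : t < 1/3 := ht.2
    have habs : |((1:ℝ))*t| ≤ 1 := by
      rw [abs_of_pos (by positivity)]; linarith
    have hb := Real.exp_bound habs (by norm_num : 0 < 10)
    have hexp : Real.exp ((1:ℝ)*t) = Real.exp t ^ 1 := by rw [one_mul, pow_one]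
    have hsum : (∑ m ∈ Finset.range 10, (((1:ℝ))*t) ^ m / m.factorial) = P1 t := by
      simp [Finset.sum_range_succ, P1, Nat.factorial]; ring
    rw [hexp, hsum] at hb
    have key : |Real.exp t ^ 1 - P1 t| ≤ t * t^9 := by
      refine le_trans hb ?_
      rw [abs_of_pos (by positivity : (0:ℝ) < ((1:ℝ))*t)]
      norm_num [Nat.factorial]
      ring_nf
      nlinarith [pow_pos ht0 10]
    rw [R1, Real.norm_eq_abs, abs_div, abs_of_pos (by positivity : (0:ℝ) < t^9),
      div_le_iff₀ (by positivity : (0:ℝ) < t^9)]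
    exact key
  · exact (continuous_id.tendsto 0).mono_left nhdsWithin_le_nhds

lemma remR2 : Filter.Tendsto R2 (nhdsWithin 0 (Set.Ioi 0)) (nhds 0) := by
  apply squeeze_zero_norm' (a := fun t : ℝ => t)
  · filter_upwards [Ioo_mem_nhdsGT_of_mem (by norm_num : (0:ℝ) ∈ Set.Ico (0:ℝ) (1/3))] with t ht
    have ht0 : (0:ℝ) < t := ht.1
    have ht3 : t < 1/3 := ht.2
    have habs : |((2:ℝ))*t| ≤ 1 := by
      rw [abs_of_pos (by positivity)]; linarith
    have hb := Real.exp_bound habs (by norm_num : 0 < 10)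
    have hexp : Real.exp ((2:ℝ)*t) = Real.exp t ^ 2 := by rw [show ((2:ℝ))*t = t + t by ring, Real.exp_add]; ring
    have hsum : (∑ m ∈ Finset.range 10, (((2:ℝ))*t) ^ m / m.factorial) = P2 t := by
      simp [Finset.sum_range_succ, P2, Nat.factorial]; ring
    rw [hexp, hsum] at hb
    have key : |Real.exp t ^ 2 - P2 t| ≤ t * t^9 := by
      refine le_trans hb ?_
      rw [abs_of_pos (by positivity : (0:ℝ) < ((2:ℝ))*t)]
      norm_num [Nat.factorial]
      ring_nf
      nlinarith [pow_pos ht0 10]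
    rw [R2, Real.norm_eq_abs, abs_div, abs_of_pos (by positivity : (0:ℝ) < t^9),
      div_le_iff₀ (by positivity : (0:ℝ) < t^9)]
    exact key
  · exact (continuous_id.tendsto 0).mono_left nhdsWithin_le_nhds

lemma remR3 : Filter.Tendsto R3 (nhdsWithin 0 (Set.Ioi 0)) (nhds 0) := by
  apply squeeze_zero_norm' (a := fun t : ℝ => t)
  · filter_upwards [Ioo_mem_nhdsGT_of_mem (by norm_num : (0:ℝ) ∈ Set.Ico (0:ℝ) (1/3))] with t ht
    have ht0 : (0:ℝ) < t := ht.1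
    have ht3 : t < 1/3 := ht.2
    have habs : |((3:ℝ))*t| ≤ 1 := by
      rw [abs_of_pos (by positivity)]; linarith
    have hb := Real.exp_bound habs (by norm_num : 0 < 10)
    have hexp : Real.exp ((3:ℝ)*t) = Real.exp t ^ 3 := by rw [show ((3:ℝ))*t = t + t + t by ring, Real.exp_add, Real.exp_add]; ring
    have hsum : (∑ m ∈ Finset.range 10, (((3:ℝ))*t) ^ m / m.factorial) = P3 t := by
      simp [Finset.sum_range_succ, P3, Nat.factorial]; ring
    rw [hexp, hsum] at hb
    have key : |Real.exp t ^ 3 - P3 t| ≤ t * t^9 := by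
      refine le_trans hb ?_
      rw [abs_of_pos (by positivity : (0:ℝ) < ((3:ℝ))*t)]
      norm_num [Nat.factorial]
      ring_nf
      nlinarith [pow_pos ht0 10]
    rw [R3, Real.norm_eq_abs, abs_div, abs_of_pos (by positivity : (0:ℝ) < t^9),
      div_le_iff₀ (by positivity : (0:ℝ) < t^9)]
    exact key
  · exact (continuous_id.tendsto 0).mono_left nhdsWithin_le_nhds

lemma aux_zero (c1 c2 c3 : ℝ → ℝ) (h1 : Continuous c1) (h2 : Continuous c2)
    (h3 : Continuous c3) :
    Filter.Tendsto (fun t : ℝ => c1 t * R1 t + c2 t * R2 t + c3 t * R3 t)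
      (nhdsWithin 0 (Set.Ioi 0)) (nhds 0) := by
  have t1 := ((h1.tendsto 0).mono_left nhdsWithin_le_nhds).mul remR1
  have t2 := ((h2.tendsto 0).mono_left nhdsWithin_le_nhds).mul remR2
  have t3 := ((h3.tendsto 0).mono_left nhdsWithin_le_nhds).mul remR3
  have := (t1.add t2).add t3
  simpa using this

lemma limq3 : Filter.Tendsto (fun t : ℝ => (q3f t) / t^9)
    (nhdsWithin 0 (Set.Ioi 0)) (nhds (((-1:ℝ)/2160))) := by
  have hQ : Filter.Tendsto (fun t : ℝ => ((-1:ℝ)/2160) + ((41:ℝ)/672)*t + ((251:ℝ)/15120)*t^2 + ((3:ℝ)/4480)*t^3 + ((73:ℝ)/51840)*t^4) (nhdsWithin (0:ℝ) (Set.Ioi 0)) (nhds (((-1:ℝ)/2160))) := by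
    have h := (Continuous.tendsto (by fun_prop : Continuous (fun t : ℝ => ((-1:ℝ)/2160) + ((41:ℝ)/672)*t + ((251:ℝ)/15120)*t^2 + ((3:ℝ)/4480)*t^3 + ((73:ℝ)/51840)*t^4)) 0).mono_left
      (nhdsWithin_le_nhds (s := Set.Ioi (0:ℝ)))
    norm_num at h ⊢
    convert h using 2 <;> norm_num
  have hz := aux_zero (fun t : ℝ => (-12) + (-12)*t^2 + (-4)*t^3 + (-1)*t^4) (fun t : ℝ => (12) + (12)*t^2 + (-4)*t^3 + (1)*t^4) (fun t : ℝ => (-4))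
    (by fun_prop) (by fun_prop) (by fun_prop)
  have main := hQ.add hz
  rw [add_zero] at main
  refine Filter.Tendsto.congr' ?_ main
  filter_upwards [self_mem_nhdsWithin] with t ht
  have ht0 : (t:ℝ) ≠ 0 := ne_of_gt ht
  rw [q3f]
  rw [R1, R2, R3, P1, P2, P3]
  field_simp
  ring


lemma limA00 : Filter.Tendsto (fun t : ℝ => ((-2)*Real.exp t + (4)*Real.exp t^2 + (-2)*Real.exp t^3 + (-4)*t*Real.exp t + (4)*t*Real.exp t^2 + (-1)*t^2*Real.exp t + (-1)*t^2*Real.exp t^2 + (1)*t^3*Real.exp t^2) / t^4)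
    (nhdsWithin 0 (Set.Ioi 0)) (nhds ((0))) := by
  have hQ : Filter.Tendsto (fun t : ℝ => ((-1:ℝ)/72)*t^2 + ((-1:ℝ)/40)*t^3 + ((-11:ℝ)/480)*t^4 + ((-431:ℝ)/30240)*t^5 + ((8947:ℝ)/362880)*t^6 + ((199:ℝ)/40320)*t^7 + ((4:ℝ)/2835)*t^8) (nhdsWithin (0:ℝ) (Set.Ioi 0)) (nhds ((0))) := by
    have h := (Continuous.tendsto (by fun_prop : Continuous (fun t : ℝ => ((-1:ℝ)/72)*t^2 + ((-1:ℝ)/40)*t^3 + ((-11:ℝ)/480)*t^4 + ((-431:ℝ)/30240)*t^5 + ((8947:ℝ)/362880)*t^6 + ((199:ℝ)/40320)*t^7 + ((4:ℝ)/2835)*t^8)) 0).mono_left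
      (nhdsWithin_le_nhds (s := Set.Ioi (0:ℝ)))
    norm_num at h ⊢
    convert h using 2 <;> norm_num
  have hz := aux_zero (fun t : ℝ => (-2) + (-4)*t + (-1)*t^2) (fun t : ℝ => (4) + (4)*t + (-1)*t^2 + (1)*t^3) (fun t : ℝ => (-2))
    (by fun_prop) (by fun_prop) (by fun_prop)
  have ht5 : Filter.Tendsto (fun t : ℝ => t^5) (nhdsWithin (0:ℝ) (Set.Ioi 0)) (nhds 0) := by
    have := ((continuous_id.pow 5).tendsto 0).mono_left (nhdsWithin_le_nhds (s := Set.Ioi (0:ℝ)))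
    convert this using 2 <;> simp
  have hz2 := ht5.mul hz
  rw [mul_zero] at hz2
  have main := hQ.add hz2
  rw [add_zero] at main
  refine Filter.Tendsto.congr' ?_ main
  filter_upwards [self_mem_nhdsWithin] with t ht
  have ht0 : (t:ℝ) ≠ 0 := ne_of_gt ht
  rw [R1, R2, R3, P1, P2, P3]
  field_simp
  ring


lemma limA01 : Filter.Tendsto (fun t : ℝ => ((-2)*t^2*Real.exp t + (2)*t^2*Real.exp t^2 + (-1)*t^3*Real.exp t + (-1)*t^3*Real.exp t^2) / t^4)
    (nhdsWithin 0 (Set.Ioi 0)) (nhds ((0))) := by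
  have hQ : Filter.Tendsto (fun t : ℝ => ((-1:ℝ)/6)*t + ((-1:ℝ)/4)*t^2 + ((-23:ℝ)/120)*t^3 + ((-1:ℝ)/10)*t^4 + ((-67:ℝ)/1680)*t^5 + ((-29:ℝ)/2240)*t^6 + ((-1291:ℝ)/362880)*t^7 + ((-19:ℝ)/13440)*t^8) (nhdsWithin (0:ℝ) (Set.Ioi 0)) (nhds ((0))) := by
    have h := (Continuous.tendsto (by fun_prop : Continuous (fun t : ℝ => ((-1:ℝ)/6)*t + ((-1:ℝ)/4)*t^2 + ((-23:ℝ)/120)*t^3 + ((-1:ℝ)/10)*t^4 + ((-67:ℝ)/1680)*t^5 + ((-29:ℝ)/2240)*t^6 + ((-1291:ℝ)/362880)*t^7 + ((-19:ℝ)/13440)*t^8)) 0).mono_left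
      (nhdsWithin_le_nhds (s := Set.Ioi (0:ℝ)))
    norm_num at h ⊢
    convert h using 2 <;> norm_num
  have hz := aux_zero (fun t : ℝ => (-2)*t^2 + (-1)*t^3) (fun t : ℝ => (2)*t^2 + (-1)*t^3) (fun t : ℝ => 0)
    (by fun_prop) (by fun_prop) (by fun_prop)
  have ht5 : Filter.Tendsto (fun t : ℝ => t^5) (nhdsWithin (0:ℝ) (Set.Ioi 0)) (nhds 0) := by
    have := ((continuous_id.pow 5).tendsto 0).mono_left (nhdsWithin_le_nhds (s := Set.Ioi (0:ℝ)))
    convert this using 2 <;> simp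
  have hz2 := ht5.mul hz
  rw [mul_zero] at hz2
  have main := hQ.add hz2
  rw [add_zero] at main
  refine Filter.Tendsto.congr' ?_ main
  filter_upwards [self_mem_nhdsWithin] with t ht
  have ht0 : (t:ℝ) ≠ 0 := ne_of_gt ht
  rw [R1, R2, R3, P1, P2, P3]
  field_simp
  ring


lemma limA02 : Filter.Tendsto (fun t : ℝ => ((2) + (-4)*Real.exp t + (2)*Real.exp t^2 + (4)*t*Real.exp t + (-4)*t*Real.exp t^2 + (1)*t^2*Real.exp t + (1)*t^2*Real.exp t^2 + (1)*t^3*Real.exp t) / t^4)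
    (nhdsWithin 0 (Set.Ioi 0)) (nhds ((0))) := by
  have hQ : Filter.Tendsto (fun t : ℝ => ((1:ℝ)/72)*t^2 + ((1:ℝ)/60)*t^3 + ((1:ℝ)/96)*t^4 + ((17:ℝ)/3780)*t^5 + ((341:ℝ)/362880)*t^6 + ((29:ℝ)/20160)*t^7 + ((1:ℝ)/362880)*t^8) (nhdsWithin (0:ℝ) (Set.Ioi 0)) (nhds ((0))) := by
    have h := (Continuous.tendsto (by fun_prop : Continuous (fun t : ℝ => ((1:ℝ)/72)*t^2 + ((1:ℝ)/60)*t^3 + ((1:ℝ)/96)*t^4 + ((17:ℝ)/3780)*t^5 + ((341:ℝ)/362880)*t^6 + ((29:ℝ)/20160)*t^7 + ((1:ℝ)/362880)*t^8)) 0).mono_left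
      (nhdsWithin_le_nhds (s := Set.Ioi (0:ℝ)))
    norm_num at h ⊢
    convert h using 2 <;> norm_num
  have hz := aux_zero (fun t : ℝ => (-4) + (4)*t + (1)*t^2 + (1)*t^3) (fun t : ℝ => (2) + (-4)*t + (1)*t^2) (fun t : ℝ => 0)
    (by fun_prop) (by fun_prop) (by fun_prop)
  have ht5 : Filter.Tendsto (fun t : ℝ => t^5) (nhdsWithin (0:ℝ) (Set.Ioi 0)) (nhds 0) := by
    have := ((continuous_id.pow 5).tendsto 0).mono_left (nhdsWithin_le_nhds (s := Set.Ioi (0:ℝ)))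
    convert this using 2 <;> simp
  have hz2 := ht5.mul hz
  rw [mul_zero] at hz2
  have main := hQ.add hz2
  rw [add_zero] at main
  refine Filter.Tendsto.congr' ?_ main
  filter_upwards [self_mem_nhdsWithin] with t ht
  have ht0 : (t:ℝ) ≠ 0 := ne_of_gt ht
  rw [R1, R2, R3, P1, P2, P3]
  field_simp
  ring


lemma limA03 : Filter.Tendsto (fun t : ℝ => ((2)*t + (-4)*t*Real.exp t + (2)*t*Real.exp t^2 + (-2)*t^3*Real.exp t) / t^4)
    (nhdsWithin 0 (Set.Ioi 0)) (nhds ((0))) := by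
  have hQ : Filter.Tendsto (fun t : ℝ => ((1:ℝ)/6)*t + ((1:ℝ)/6)*t^2 + ((4:ℝ)/45)*t^3 + ((1:ℝ)/30)*t^4 + ((11:ℝ)/1120)*t^5 + ((73:ℝ)/30240)*t^6 + ((-1:ℝ)/20160)*t^7 + ((-1:ℝ)/181440)*t^8) (nhdsWithin (0:ℝ) (Set.Ioi 0)) (nhds ((0))) := by
    have h := (Continuous.tendsto (by fun_prop : Continuous (fun t : ℝ => ((1:ℝ)/6)*t + ((1:ℝ)/6)*t^2 + ((4:ℝ)/45)*t^3 + ((1:ℝ)/30)*t^4 + ((11:ℝ)/1120)*t^5 + ((73:ℝ)/30240)*t^6 + ((-1:ℝ)/20160)*t^7 + ((-1:ℝ)/181440)*t^8)) 0).mono_left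
      (nhdsWithin_le_nhds (s := Set.Ioi (0:ℝ)))
    norm_num at h ⊢
    convert h using 2 <;> norm_num
  have hz := aux_zero (fun t : ℝ => (-4)*t + (-2)*t^3) (fun t : ℝ => (2)*t) (fun t : ℝ => 0)
    (by fun_prop) (by fun_prop) (by fun_prop)
  have ht5 : Filter.Tendsto (fun t : ℝ => t^5) (nhdsWithin (0:ℝ) (Set.Ioi 0)) (nhds 0) := by
    have := ((continuous_id.pow 5).tendsto 0).mono_left (nhdsWithin_le_nhds (s := Set.Ioi (0:ℝ)))
    convert this using 2 <;> simp
  have hz2 := ht5.mul hz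
  rw [mul_zero] at hz2
  have main := hQ.add hz2
  rw [add_zero] at main
  refine Filter.Tendsto.congr' ?_ main
  filter_upwards [self_mem_nhdsWithin] with t ht
  have ht0 : (t:ℝ) ≠ 0 := ne_of_gt ht
  rw [R1, R2, R3, P1, P2, P3]
  field_simp
  ring


lemma limA11 : Filter.Tendsto (fun t : ℝ => ((-4)*Real.exp t + (8)*Real.exp t^2 + (-4)*Real.exp t^3 + (4)*t*Real.exp t + (-4)*t*Real.exp t^2 + (-2)*t^2*Real.exp t + (10)*t^2*Real.exp t^2 + (-4)*t^3*Real.exp t^2 + (-1)*t^4*Real.exp t + (1)*t^4*Real.exp t^2) / t^4)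
    (nhdsWithin 0 (Set.Ioi 0)) (nhds ((-2))) := by
  have hQ : Filter.Tendsto (fun t : ℝ => (-2) + ((-5:ℝ)/2)*t + ((-293:ℝ)/180)*t^2 + ((-11:ℝ)/15)*t^3 + ((-431:ℝ)/1680)*t^4 + ((-2257:ℝ)/30240)*t^5 + ((7933:ℝ)/181440)*t^6 + ((841:ℝ)/60480)*t^7 + ((247:ℝ)/362880)*t^8 + ((73:ℝ)/51840)*t^9) (nhdsWithin (0:ℝ) (Set.Ioi 0)) (nhds ((-2))) := by
    have h := (Continuous.tendsto (by fun_prop : Continuous (fun t : ℝ => (-2) + ((-5:ℝ)/2)*t + ((-293:ℝ)/180)*t^2 + ((-11:ℝ)/15)*t^3 + ((-431:ℝ)/1680)*t^4 + ((-2257:ℝ)/30240)*t^5 + ((7933:ℝ)/181440)*t^6 + ((841:ℝ)/60480)*t^7 + ((247:ℝ)/362880)*t^8 + ((73:ℝ)/51840)*t^9)) 0).mono_left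
      (nhdsWithin_le_nhds (s := Set.Ioi (0:ℝ)))
    norm_num at h ⊢
    convert h using 2 <;> norm_num
  have hz := aux_zero (fun t : ℝ => (-4) + (4)*t + (-2)*t^2 + (-1)*t^4) (fun t : ℝ => (8) + (-4)*t + (10)*t^2 + (-4)*t^3 + (1)*t^4) (fun t : ℝ => (-4))
    (by fun_prop) (by fun_prop) (by fun_prop)
  have ht5 : Filter.Tendsto (fun t : ℝ => t^5) (nhdsWithin (0:ℝ) (Set.Ioi 0)) (nhds 0) := by
    have := ((continuous_id.pow 5).tendsto 0).mono_left (nhdsWithin_le_nhds (s := Set.Ioi (0:ℝ)))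
    convert this using 2 <;> simp
  have hz2 := ht5.mul hz
  rw [mul_zero] at hz2
  have main := hQ.add hz2
  rw [add_zero] at main
  refine Filter.Tendsto.congr' ?_ main
  filter_upwards [self_mem_nhdsWithin] with t ht
  have ht0 : (t:ℝ) ≠ 0 := ne_of_gt ht
  rw [R1, R2, R3, P1, P2, P3]
  field_simp
  ring


lemma limA13 : Filter.Tendsto (fun t : ℝ => ((4) + (-8)*Real.exp t + (4)*Real.exp t^2 + (-4)*t + (4)*t*Real.exp t + (2)*t^2 + (-10)*t^2*Real.exp t + (4)*t^3*Real.exp t) / t^4)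
    (nhdsWithin 0 (Set.Ioi 0)) (nhds ((2))) := by
  have hQ : Filter.Tendsto (fun t : ℝ => (2) + ((3:ℝ)/2)*t + ((113:ℝ)/180)*t^2 + ((17:ℝ)/90)*t^3 + ((229:ℝ)/5040)*t^4 + ((281:ℝ)/30240)*t^5 + ((101:ℝ)/181440)*t^6 + ((13:ℝ)/181440)*t^7 + ((1:ℝ)/90720)*t^8) (nhdsWithin (0:ℝ) (Set.Ioi 0)) (nhds ((2))) := by
    have h := (Continuous.tendsto (by fun_prop : Continuous (fun t : ℝ => (2) + ((3:ℝ)/2)*t + ((113:ℝ)/180)*t^2 + ((17:ℝ)/90)*t^3 + ((229:ℝ)/5040)*t^4 + ((281:ℝ)/30240)*t^5 + ((101:ℝ)/181440)*t^6 + ((13:ℝ)/181440)*t^7 + ((1:ℝ)/90720)*t^8)) 0).mono_left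
      (nhdsWithin_le_nhds (s := Set.Ioi (0:ℝ)))
    norm_num at h ⊢
    convert h using 2 <;> norm_num
  have hz := aux_zero (fun t : ℝ => (-8) + (4)*t + (-10)*t^2 + (4)*t^3) (fun t : ℝ => (4)) (fun t : ℝ => 0)
    (by fun_prop) (by fun_prop) (by fun_prop)
  have ht5 : Filter.Tendsto (fun t : ℝ => t^5) (nhdsWithin (0:ℝ) (Set.Ioi 0)) (nhds 0) := by
    have := ((continuous_id.pow 5).tendsto 0).mono_left (nhdsWithin_le_nhds (s := Set.Ioi (0:ℝ)))
    convert this using 2 <;> simp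
  have hz2 := ht5.mul hz
  rw [mul_zero] at hz2
  have main := hQ.add hz2
  rw [add_zero] at main
  refine Filter.Tendsto.congr' ?_ main
  filter_upwards [self_mem_nhdsWithin] with t ht
  have ht0 : (t:ℝ) ≠ 0 := ne_of_gt ht
  rw [R1, R2, R3, P1, P2, P3]
  field_simp
  ring


lemma limA22 : Filter.Tendsto (fun t : ℝ => ((-2) + (4)*Real.exp t + (-2)*Real.exp t^2 + (-4)*t + (4)*t*Real.exp t + (-1)*t^2 + (-1)*t^2*Real.exp t + (1)*t^3*Real.exp t) / t^4)
    (nhdsWithin 0 (Set.Ioi 0)) (nhds ((0))) := by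
  have hQ : Filter.Tendsto (fun t : ℝ => ((-1:ℝ)/72)*t^2 + ((-1:ℝ)/90)*t^3 + ((-7:ℝ)/1440)*t^4 + ((-23:ℝ)/15120)*t^5 + ((67:ℝ)/362880)*t^6 + ((1:ℝ)/45360)*t^7 + ((1:ℝ)/362880)*t^8) (nhdsWithin (0:ℝ) (Set.Ioi 0)) (nhds ((0))) := by
    have h := (Continuous.tendsto (by fun_prop : Continuous (fun t : ℝ => ((-1:ℝ)/72)*t^2 + ((-1:ℝ)/90)*t^3 + ((-7:ℝ)/1440)*t^4 + ((-23:ℝ)/15120)*t^5 + ((67:ℝ)/362880)*t^6 + ((1:ℝ)/45360)*t^7 + ((1:ℝ)/362880)*t^8)) 0).mono_left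
      (nhdsWithin_le_nhds (s := Set.Ioi (0:ℝ)))
    norm_num at h ⊢
    convert h using 2 <;> norm_num
  have hz := aux_zero (fun t : ℝ => (4) + (4)*t + (-1)*t^2 + (1)*t^3) (fun t : ℝ => (-2)) (fun t : ℝ => 0)
    (by fun_prop) (by fun_prop) (by fun_prop)
  have ht5 : Filter.Tendsto (fun t : ℝ => t^5) (nhdsWithin (0:ℝ) (Set.Ioi 0)) (nhds 0) := by
    have := ((continuous_id.pow 5).tendsto 0).mono_left (nhdsWithin_le_nhds (s := Set.Ioi (0:ℝ)))
    convert this using 2 <;> simp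
  have hz2 := ht5.mul hz
  rw [mul_zero] at hz2
  have main := hQ.add hz2
  rw [add_zero] at main
  refine Filter.Tendsto.congr' ?_ main
  filter_upwards [self_mem_nhdsWithin] with t ht
  have ht0 : (t:ℝ) ≠ 0 := ne_of_gt ht
  rw [R1, R2, R3, P1, P2, P3]
  field_simp
  ring


lemma limA23 : Filter.Tendsto (fun t : ℝ => ((-2)*t^2 + (2)*t^2*Real.exp t + (-1)*t^3 + (-1)*t^3*Real.exp t) / t^4)
    (nhdsWithin 0 (Set.Ioi 0)) (nhds ((0))) := by
  have hQ : Filter.Tendsto (fun t : ℝ => ((-1:ℝ)/6)*t + ((-1:ℝ)/12)*t^2 + ((-1:ℝ)/40)*t^3 + ((-1:ℝ)/180)*t^4 + ((-1:ℝ)/1008)*t^5 + ((-1:ℝ)/6720)*t^6 + ((-1:ℝ)/51840)*t^7 + ((-1:ℝ)/362880)*t^8) (nhdsWithin (0:ℝ) (Set.Ioi 0)) (nhds ((0))) := by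
    have h := (Continuous.tendsto (by fun_prop : Continuous (fun t : ℝ => ((-1:ℝ)/6)*t + ((-1:ℝ)/12)*t^2 + ((-1:ℝ)/40)*t^3 + ((-1:ℝ)/180)*t^4 + ((-1:ℝ)/1008)*t^5 + ((-1:ℝ)/6720)*t^6 + ((-1:ℝ)/51840)*t^7 + ((-1:ℝ)/362880)*t^8)) 0).mono_left
      (nhdsWithin_le_nhds (s := Set.Ioi (0:ℝ)))
    norm_num at h ⊢
    convert h using 2 <;> norm_num
  have hz := aux_zero (fun t : ℝ => (2)*t^2 + (-1)*t^3) (fun t : ℝ => 0) (fun t : ℝ => 0)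
    (by fun_prop) (by fun_prop) (by fun_prop)
  have ht5 : Filter.Tendsto (fun t : ℝ => t^5) (nhdsWithin (0:ℝ) (Set.Ioi 0)) (nhds 0) := by
    have := ((continuous_id.pow 5).tendsto 0).mono_left (nhdsWithin_le_nhds (s := Set.Ioi (0:ℝ)))
    convert this using 2 <;> simp
  have hz2 := ht5.mul hz
  rw [mul_zero] at hz2
  have main := hQ.add hz2
  rw [add_zero] at main
  refine Filter.Tendsto.congr' ?_ main
  filter_upwards [self_mem_nhdsWithin] with t ht
  have ht0 : (t:ℝ) ≠ 0 := ne_of_gt ht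
  rw [R1, R2, R3, P1, P2, P3]
  field_simp
  ring


lemma limA33 : Filter.Tendsto (fun t : ℝ => ((-4) + (8)*Real.exp t + (-4)*Real.exp t^2 + (4)*t + (-4)*t*Real.exp t + (-2)*t^2 + (10)*t^2*Real.exp t + (-4)*t^3*Real.exp t + (-1)*t^4 + (1)*t^4*Real.exp t) / t^4)
    (nhdsWithin 0 (Set.Ioi 0)) (nhds ((-2))) := by
  have hQ : Filter.Tendsto (fun t : ℝ => (-2) + ((-1:ℝ)/2)*t + ((-23:ℝ)/180)*t^2 + ((-1:ℝ)/45)*t^3 + ((-19:ℝ)/5040)*t^4 + ((-29:ℝ)/30240)*t^5 + ((151:ℝ)/181440)*t^6 + ((23:ℝ)/181440)*t^7 + ((1:ℝ)/72576)*t^8 + ((1:ℝ)/362880)*t^9) (nhdsWithin (0:ℝ) (Set.Ioi 0)) (nhds ((-2))) := by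
    have h := (Continuous.tendsto (by fun_prop : Continuous (fun t : ℝ => (-2) + ((-1:ℝ)/2)*t + ((-23:ℝ)/180)*t^2 + ((-1:ℝ)/45)*t^3 + ((-19:ℝ)/5040)*t^4 + ((-29:ℝ)/30240)*t^5 + ((151:ℝ)/181440)*t^6 + ((23:ℝ)/181440)*t^7 + ((1:ℝ)/72576)*t^8 + ((1:ℝ)/362880)*t^9)) 0).mono_left
      (nhdsWithin_le_nhds (s := Set.Ioi (0:ℝ)))
    norm_num at h ⊢
    convert h using 2 <;> norm_num
  have hz := aux_zero (fun t : ℝ => (8) + (-4)*t + (10)*t^2 + (-4)*t^3 + (1)*t^4) (fun t : ℝ => (-4)) (fun t : ℝ => 0)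
    (by fun_prop) (by fun_prop) (by fun_prop)
  have ht5 : Filter.Tendsto (fun t : ℝ => t^5) (nhdsWithin (0:ℝ) (Set.Ioi 0)) (nhds 0) := by
    have := ((continuous_id.pow 5).tendsto 0).mono_left (nhdsWithin_le_nhds (s := Set.Ioi (0:ℝ)))
    convert this using 2 <;> simp
  have hz2 := ht5.mul hz
  rw [mul_zero] at hz2
  have main := hQ.add hz2
  rw [add_zero] at main
  refine Filter.Tendsto.congr' ?_ main
  filter_upwards [self_mem_nhdsWithin] with t ht
  have ht0 : (t:ℝ) ≠ 0 := ne_of_gt ht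
  rw [R1, R2, R3, P1, P2, P3]
  field_simp
  ring


lemma dd_ne {t : ℝ} (h0 : 0 < t) (h1 : t < 1) : dd t ≠ 0 := by
  intro h
  have he := Real.add_one_lt_exp (ne_of_gt h0)
  rw [dd] at h
  nlinarith

set_option maxHeartbeats 1000000 in
lemma NN_mul_A (t : ℝ) : NN t * AA t = (dd t * q3f t) • (1 : Matrix (Fin 4) (Fin 4) ℝ) := by
  ext i j
  fin_cases i <;> fin_cases j <;>
  · simp only [NN, AA, dd, q3f, Matrix.mul_apply, Fin.sum_univ_four, Matrix.smul_apply,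
      Matrix.one_apply, Matrix.cons_val', Matrix.cons_val_zero, Matrix.cons_val_one,
      Matrix.head_cons, Matrix.head_fin_const, Matrix.empty_val', Matrix.cons_val_fin_one,
      Matrix.of_apply, smul_eq_mul, Fin.mk.injEq, Matrix.cons_val]
    norm_num
    ring

lemma Lam_mul (t : ℝ) (h1 : dd t ≠ 0) (h2 : q3f t ≠ 0) :
    Lam t * ((q3f t)⁻¹ • AA t) = 1 := by
  rw [Lam, Matrix.smul_mul, Matrix.mul_smul, NN_mul_A, smul_smul, smul_smul]
  rw [show ((1/dd t) * (q3f t)⁻¹) * (dd t * q3f t) = 1 by field_simp]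
  exact one_smul _ _

lemma Lam_isUnit (t : ℝ) (h1 : dd t ≠ 0) (h2 : q3f t ≠ 0) : IsUnit (Lam t) := by
  rw [Matrix.isUnit_iff_isUnit_det]
  refine IsUnit.of_mul_eq_one (((q3f t)⁻¹ • AA t).det) ?_
  rw [← Matrix.det_mul, Lam_mul t h1 h2, Matrix.det_one]

lemma Lam_inv_apply (t : ℝ) (h1 : dd t ≠ 0) (h2 : q3f t ≠ 0) (i j : Fin 4) :
    (Lam t)⁻¹ i j = (q3f t)⁻¹ * AA t i j := by
  rw [Matrix.inv_eq_right_inv (Lam_mul t h1 h2), Matrix.smul_apply, smul_eq_mul]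

lemma q3_ev : ∀ᶠ t in nhdsWithin (0:ℝ) (Set.Ioi 0), q3f t ≠ 0 := by
  have h := limq3.eventually_ne (by norm_num : (-1/2160 : ℝ) ≠ 0)
  filter_upwards [h] with t h1
  intro h0
  apply h1
  rw [h0, zero_div]

lemma entry_lim (i j : Fin 4) (L : ℝ)
    (hA : Filter.Tendsto (fun t : ℝ => AA t i j / t^4) (nhdsWithin 0 (Set.Ioi 0)) (nhds L)) :
    Filter.Tendsto (fun t : ℝ => t^5 * (Lam t)⁻¹ i j) (nhdsWithin 0 (Set.Ioi 0))
      (nhds (L * (-2160))) := by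
  have main := hA.div limq3 (by norm_num : (-1/2160 : ℝ) ≠ 0)
  have heq : L / (-1/2160) = L * (-2160) := by ring
  rw [heq] at main
  refine Filter.Tendsto.congr' ?_ main
  filter_upwards [q3_ev, Ioo_mem_nhdsGT_of_mem (by norm_num : (0:ℝ) ∈ Set.Ico (0:ℝ) 1),
    self_mem_nhdsWithin] with t hq htlt htpos
  have hd := dd_ne htlt.1 htlt.2
  rw [Lam_inv_apply t hd hq i j]
  have ht0 : (t:ℝ) ≠ 0 := ne_of_gt htpos
  rw [Pi.div_apply]
  field_simp

theorem t5_Lam_inv_tendsto :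
    ∃ δ > (0:ℝ), (∀ t ∈ Set.Ioo (0:ℝ) δ, IsUnit (Lam t)) ∧
      ∀ i j : Fin 4,
        Filter.Tendsto (fun t : ℝ => t^5 * (Lam t)⁻¹ i j)
          (nhdsWithin 0 (Set.Ioi 0)) (nhds (Y0 i j)) := by
  obtain ⟨u, hu, hsub⟩ := mem_nhdsGT_iff_exists_Ioo_subset.mp
    (Filter.eventually_iff.mp q3_ev)
  refine ⟨min u 1, lt_min (Set.mem_Ioi.mp hu) one_pos, ?_, ?_⟩
  · intro t ht
    have h1 : t ∈ Set.Ioo (0:ℝ) u := ⟨ht.1, lt_of_lt_of_le ht.2 (min_le_left _ _)⟩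
    have h2 : t < 1 := lt_of_lt_of_le ht.2 (min_le_right _ _)
    exact Lam_isUnit t (dd_ne ht.1 h2) (hsub h1)
  · intro i j
    fin_cases i <;> fin_cases j
    · have h := entry_lim 0 0 ((0)) (by
        have e : ∀ t : ℝ, AA t 0 0 = (-2)*Real.exp t + (4)*Real.exp t^2 + (-2)*Real.exp t^3 + (-4)*t*Real.exp t + (4)*t*Real.exp t^2 + (-1)*t^2*Real.exp t + (-1)*t^2*Real.exp t^2 + (1)*t^3*Real.exp t^2 := fun t => by simp [AA]
        simpa only [e] using limA00)
      convert h using 3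
      all_goals first | rfl | norm_num [Y0, Fin.reduceFinMk]
    · have h := entry_lim 0 1 ((0)) (by
        have e : ∀ t : ℝ, AA t 0 1 = (-2)*t^2*Real.exp t + (2)*t^2*Real.exp t^2 + (-1)*t^3*Real.exp t + (-1)*t^3*Real.exp t^2 := fun t => by simp [AA]
        simpa only [e] using limA01)
      convert h using 3
      all_goals first | rfl | norm_num [Y0, Fin.reduceFinMk]
    · have h := entry_lim 0 2 ((0)) (by
        have e : ∀ t : ℝ, AA t 0 2 = (2) + (-4)*Real.exp t + (2)*Real.exp t^2 + (4)*t*Real.exp t + (-4)*t*Real.exp t^2 + (1)*t^2*Real.exp t + (1)*t^2*Real.exp t^2 + (1)*t^3*Real.exp t := fun t => by simp [AA]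
        simpa only [e] using limA02)
      convert h using 3
      all_goals first | rfl | norm_num [Y0, Fin.reduceFinMk]
    · have h := entry_lim 0 3 ((0)) (by
        have e : ∀ t : ℝ, AA t 0 3 = (2)*t + (-4)*t*Real.exp t + (2)*t*Real.exp t^2 + (-2)*t^3*Real.exp t := fun t => by simp [AA]
        simpa only [e] using limA03)
      convert h using 3
      all_goals first | rfl | norm_num [Y0, Fin.reduceFinMk]
    · have h := entry_lim 1 0 ((0)) (by
        have e : ∀ t : ℝ, AA t 1 0 = (-2)*t^2*Real.exp t + (2)*t^2*Real.exp t^2 + (-1)*t^3*Real.exp t + (-1)*t^3*Real.exp t^2 := fun t => by simp [AA]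
        simpa only [e] using limA01)
      convert h using 3
      all_goals first | rfl | norm_num [Y0, Fin.reduceFinMk]
    · have h := entry_lim 1 1 ((-2)) (by
        have e : ∀ t : ℝ, AA t 1 1 = (-4)*Real.exp t + (8)*Real.exp t^2 + (-4)*Real.exp t^3 + (4)*t*Real.exp t + (-4)*t*Real.exp t^2 + (-2)*t^2*Real.exp t + (10)*t^2*Real.exp t^2 + (-4)*t^3*Real.exp t^2 + (-1)*t^4*Real.exp t + (1)*t^4*Real.exp t^2 := fun t => by simp [AA]
        simpa only [e] using limA11)
      convert h using 3
      all_goals first | rfl | norm_num [Y0, Fin.reduceFinMk]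
    · have h := entry_lim 1 2 ((0)) (by
        have e : ∀ t : ℝ, AA t 1 2 = (2)*t + (-4)*t*Real.exp t + (2)*t*Real.exp t^2 + (-2)*t^3*Real.exp t := fun t => by simp [AA]
        simpa only [e] using limA03)
      convert h using 3
      all_goals first | rfl | norm_num [Y0, Fin.reduceFinMk]
    · have h := entry_lim 1 3 ((2)) (by
        have e : ∀ t : ℝ, AA t 1 3 = (4) + (-8)*Real.exp t + (4)*Real.exp t^2 + (-4)*t + (4)*t*Real.exp t + (2)*t^2 + (-10)*t^2*Real.exp t + (4)*t^3*Real.exp t := fun t => by simp [AA]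
        simpa only [e] using limA13)
      convert h using 3
      all_goals first | rfl | norm_num [Y0, Fin.reduceFinMk]
    · have h := entry_lim 2 0 ((0)) (by
        have e : ∀ t : ℝ, AA t 2 0 = (2) + (-4)*Real.exp t + (2)*Real.exp t^2 + (4)*t*Real.exp t + (-4)*t*Real.exp t^2 + (1)*t^2*Real.exp t + (1)*t^2*Real.exp t^2 + (1)*t^3*Real.exp t := fun t => by simp [AA]
        simpa only [e] using limA02)
      convert h using 3
      all_goals first | rfl | norm_num [Y0, Fin.reduceFinMk]
    · have h := entry_lim 2 1 ((0)) (by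
        have e : ∀ t : ℝ, AA t 2 1 = (2)*t + (-4)*t*Real.exp t + (2)*t*Real.exp t^2 + (-2)*t^3*Real.exp t := fun t => by simp [AA]
        simpa only [e] using limA03)
      convert h using 3
      all_goals first | rfl | norm_num [Y0, Fin.reduceFinMk]
    · have h := entry_lim 2 2 ((0)) (by
        have e : ∀ t : ℝ, AA t 2 2 = (-2) + (4)*Real.exp t + (-2)*Real.exp t^2 + (-4)*t + (4)*t*Real.exp t + (-1)*t^2 + (-1)*t^2*Real.exp t + (1)*t^3*Real.exp t := fun t => by simp [AA]
        simpa only [e] using limA22)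
      convert h using 3
      all_goals first | rfl | norm_num [Y0, Fin.reduceFinMk]
    · have h := entry_lim 2 3 ((0)) (by
        have e : ∀ t : ℝ, AA t 2 3 = (-2)*t^2 + (2)*t^2*Real.exp t + (-1)*t^3 + (-1)*t^3*Real.exp t := fun t => by simp [AA]
        simpa only [e] using limA23)
      convert h using 3
      all_goals first | rfl | norm_num [Y0, Fin.reduceFinMk]
    · have h := entry_lim 3 0 ((0)) (by
        have e : ∀ t : ℝ, AA t 3 0 = (2)*t + (-4)*t*Real.exp t + (2)*t*Real.exp t^2 + (-2)*t^3*Real.exp t := fun t => by simp [AA]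
        simpa only [e] using limA03)
      convert h using 3
      all_goals first | rfl | norm_num [Y0, Fin.reduceFinMk]
    · have h := entry_lim 3 1 ((2)) (by
        have e : ∀ t : ℝ, AA t 3 1 = (4) + (-8)*Real.exp t + (4)*Real.exp t^2 + (-4)*t + (4)*t*Real.exp t + (2)*t^2 + (-10)*t^2*Real.exp t + (4)*t^3*Real.exp t := fun t => by simp [AA]
        simpa only [e] using limA13)
      convert h using 3
      all_goals first | rfl | norm_num [Y0, Fin.reduceFinMk]
    · have h := entry_lim 3 2 ((0)) (by
        have e : ∀ t : ℝ, AA t 3 2 = (-2)*t^2 + (2)*t^2*Real.exp t + (-1)*t^3 + (-1)*t^3*Real.exp t := fun t => by simp [AA]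
        simpa only [e] using limA23)
      convert h using 3
      all_goals first | rfl | norm_num [Y0, Fin.reduceFinMk]
    · have h := entry_lim 3 3 ((-2)) (by
        have e : ∀ t : ℝ, AA t 3 3 = (-4) + (8)*Real.exp t + (-4)*Real.exp t^2 + (4)*t + (-4)*t*Real.exp t + (-2)*t^2 + (10)*t^2*Real.exp t + (-4)*t^3*Real.exp t + (-1)*t^4 + (1)*t^4*Real.exp t := fun t => by simp [AA]
        simpa only [e] using limA33)
      convert h using 3
      all_goals first | rfl | norm_num [Y0, Fin.reduceFinMk]
end
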